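/- Let X be an order complete vector lattice with the countable sup property. If a net (y_α) in X order-converges to x ∈ X and is order bounded, then there exists an increasing sequence of indices (α_n) such that the sequence (y_{α_n}) order-converges to x. -/

import Mathlib

open Filter

universe u

/-- Order convergence of a net in a vector lattice: there is a net decreasing to `0`
(antitone with infimum `0`) eventually dominating `|y α - x|`. -/
def OrderConvNet {X : Type u} [Lattice X] [AddCommGroup X] {ι : Type*} [Preorder ι]
    (y : ι → X) (x : X) : Prop :=
  ∃ z : ι → X, Antitone z ∧ IsGLB (Set.range z) 0 ∧ ∀ᶠ a in atTop, |y a - x| ≤ z a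

/-- A subset is order closed if it contains the order limit of every net of its elements. -/
def OrderClosedSet {X : Type u} [Lattice X] [AddCommGroup X] (A : Set X) : Prop :=
  ∀ (ι : Type u) (_ : Preorder ι) (_ : IsDirected ι (· ≤ ·)) (_ : Nonempty ι)
    (y : ι → X) (x : X), (∀ a, y a ∈ A) → OrderConvNet y x → x ∈ A


/-- In an order complete vector lattice with the countable sup property, every
order bounded net order-converging to `x` admits an increasing sequence of indices along
which it order-converges (as a sequence) to `x`. -/
theorem exists_monotone_subsequence_orderConv
    {X : Type u} [Lattice X] [AddCommGroup X] [Module ℝ X]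
    [CovariantClass X X (· + ·) (· ≤ ·)]
    (hoc : ∀ S : Set X, S.Nonempty → BddAbove S → ∃ x, IsLUB S x)
    (hcsp : ∀ (S : Set X) (x : X), IsLUB S x → ∃ T ⊆ S, T.Countable ∧ IsLUB T x)
    (ι : Type u) [Preorder ι] [Nonempty ι] [IsDirected ι (· ≤ ·)]
    (y : ι → X) (x : X)
    (hbdd : BddAbove (Set.range y) ∧ BddBelow (Set.range y))
    (hconv : OrderConvNet y x) :
    ∃ α : ℕ → ι, Monotone α ∧ OrderConvNet (fun n => y (α n)) x := by
  classical
  letI : IsOrderedAddMonoid X :=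
    { add_le_add_left := fun a b h c => by
        rw [add_comm a c, add_comm b c]; exact CovariantClass.elim c h }
  obtain ⟨z, hz_anti, hz_glb, hev⟩ := hconv
  obtain ⟨a₀, ha₀⟩ := eventually_atTop.mp hev
  have hz0 : ∀ a, 0 ≤ z a := fun a => hz_glb.1 ⟨a, rfl⟩
  -- the negated set has LUB 0
  have hS : IsLUB (Set.range fun a => -z a) 0 := by
    constructor
    · rintro s ⟨a, rfl⟩
      simpa using hz0 a
    · intro c hc
      have : -c ∈ lowerBounds (Set.range z) := by
        rintro s ⟨a, rfl⟩
        have := hc ⟨a, rfl⟩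
        dsimp at this
        exact neg_le.mp this
      exact neg_nonpos.mp (hz_glb.2 this)
  obtain ⟨T, hTS, hTc, hTlub⟩ := hcsp _ _ hS
  -- enlarge T to ensure nonemptiness
  set i₀ : ι := Classical.arbitrary ι
  set T' : Set X := insert (-z i₀) T with hT'
  have hT'S : T' ⊆ Set.range fun a => -z a := by
    rintro s (rfl | hs)
    · exact ⟨i₀, rfl⟩
    · exact hTS hs
  have hT'c : T'.Countable := hTc.insert _
  have hT'lub : IsLUB T' 0 := by
    constructor
    · rintro s (rfl | hs)
      · simpa using hz0 i₀
      · exact hTlub.1 hs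
    · intro c hc
      exact hTlub.2 fun s hs => hc (Set.mem_insert_of_mem _ hs)
  obtain ⟨t, ht⟩ := hT'c.exists_eq_range ⟨_, Set.mem_insert _ _⟩
  have hta : ∀ n, ∃ a : ι, -z a = t n := by
    intro n
    have : t n ∈ T' := ht ▸ ⟨n, rfl⟩
    exact hT'S this
  choose a ha using hta
  -- build a monotone sequence of indices dominating a₀ and all a k
  have hdir : ∀ i j : ι, ∃ k, i ≤ k ∧ j ≤ k := fun i j => exists_ge_ge i j
  let α : ℕ → ι := fun n =>
    Nat.rec (Classical.choose (hdir a₀ (a 0)))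
      (fun m αm => Classical.choose (hdir αm (a (m + 1)))) n
  have hα0 : a₀ ≤ α 0 ∧ a 0 ≤ α 0 := Classical.choose_spec (hdir a₀ (a 0))
  have hαsucc : ∀ m, α m ≤ α (m + 1) ∧ a (m + 1) ≤ α (m + 1) :=
    fun m => Classical.choose_spec (hdir (α m) (a (m + 1)))
  have hmono : Monotone α := monotone_nat_of_le_succ fun m => (hαsucc m).1
  have hαa₀ : ∀ n, a₀ ≤ α n := fun n => hα0.1.trans (hmono (Nat.zero_le n))
  have hαa : ∀ k, a k ≤ α k := by
    rintro (_ | k)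
    · exact hα0.2
    · exact (hαsucc k).2
  -- the dominating sequence
  have hne : ∀ n : ℕ, (Finset.range (n + 1)).Nonempty := fun n => ⟨0, by simp⟩
  let w : ℕ → X := fun n => (Finset.range (n + 1)).inf' (hne n) fun k => z (a k)
  refine ⟨α, hmono, w, ?_, ?_, ?_⟩
  · intro m n hmn
    apply Finset.le_inf'
    intro k hk
    exact Finset.inf'_le _ (Finset.mem_range.mpr (lt_of_lt_of_le (Finset.mem_range.mp hk)
      (by omega)))
  · constructor
    · rintro s ⟨n, rfl⟩
      exact Finset.le_inf' _ _ fun k _ => hz0 (a k)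
    · intro b hb
      have hbz : ∀ n, b ≤ z (a n) := fun n =>
        (hb ⟨n, rfl⟩).trans (Finset.inf'_le _ (Finset.mem_range.mpr (Nat.lt_succ_self n)))
      have : -b ∈ upperBounds T' := by
        intro s hs
        obtain ⟨n, rfl⟩ := ht ▸ hs
        rw [← ha n]
        exact neg_le_neg (hbz n)
      exact neg_nonneg.mp (hT'lub.2 this)
  · refine Eventually.of_forall fun n => ?_
    apply Finset.le_inf'
    intro k hk
    have h1 : |y (α n) - x| ≤ z (α n) := ha₀ _ (hαa₀ n)
    have h2 : z (α n) ≤ z (a k) :=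
      hz_anti ((hαa k).trans (hmono (Nat.le_of_lt_succ (Finset.mem_range.mp hk))))
    exact h1.trans h2
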